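/- For any real diagonal matrix D = diag(α₁, α₂, α₃) and any unit vector j ∈ ℝ³, the eigenvalues of the complex matrix M defined by M v = i (j × (D v)) are μ₀ = 0 and μ± = ±√(α₁α₃ j₂² + α₁α₂ j₃² + α₂α₃ j₁²) (where the square root of a negative number is purely imaginary). -/

import Mathlib

open Matrix

theorem eigenvalues_of_cross_diag (α₁ α₂ α₃ : ℝ) (j : Fin 3 → ℝ)
    (hj : j 0 ^ 2 + j 1 ^ 2 + j 2 ^ 2 = 1)
    (M : Matrix (Fin 3) (Fin 3) ℂ)
    (hM : ∀ v : Fin 3 → ℂ, M.mulVec v =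
      Complex.I • crossProduct (fun k => ((j k : ℝ) : ℂ))
        ((Matrix.diagonal ![(α₁ : ℂ), (α₂ : ℂ), (α₃ : ℂ)]).mulVec v)) :
    spectrum ℂ M =
      {0,
       ((α₁ * α₃ * j 1 ^ 2 + α₁ * α₂ * j 2 ^ 2 + α₂ * α₃ * j 0 ^ 2 : ℝ) : ℂ) ^ ((2 : ℂ)⁻¹),
       -(((α₁ * α₃ * j 1 ^ 2 + α₁ * α₂ * j 2 ^ 2 + α₂ * α₃ * j 0 ^ 2 : ℝ) : ℂ) ^ ((2 : ℂ)⁻¹))} := by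
  have hMeq : M = Complex.I •
      !![(0:ℂ), -(α₂*j 2), α₃*j 1; α₁*j 2, 0, -(α₃*j 0); -(α₁*j 1), α₂*j 0, 0] := by
    ext i k
    have := congrFun (hM (Pi.single k 1)) i
    simp only [Matrix.mulVec_single_one, Matrix.col, Matrix.transpose_apply] at this
    rw [this]
    fin_cases i <;> fin_cases k <;>
      simp [crossProduct, Matrix.mulVec, dotProduct, Fin.sum_univ_three, Matrix.diagonal,
        Pi.single, Function.update] <;> ring
  set c : ℂ := ((α₁ * α₃ * j 1 ^ 2 + α₁ * α₂ * j 2 ^ 2 + α₂ * α₃ * j 0 ^ 2 : ℝ) : ℂ) with hc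
  set r : ℂ := c ^ ((2 : ℂ)⁻¹) with hrdef
  have hr : r ^ 2 = c := by
    have : ((2 : ℕ) : ℂ)⁻¹ = (2 : ℂ)⁻¹ := by norm_num
    rw [hrdef, ← this, Complex.cpow_nat_inv_pow _ (by norm_num)]
  ext x
  have hmem : x ∈ spectrum ℂ M ↔ (algebraMap ℂ (Matrix (Fin 3) (Fin 3) ℂ) x - M).det = 0 := by
    rw [spectrum.mem_iff, Matrix.isUnit_iff_isUnit_det, isUnit_iff_ne_zero, not_ne_iff]
  have hdet : (algebraMap ℂ (Matrix (Fin 3) (Fin 3) ℂ) x - M).det = x * (x - r) * (x + r) := by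
    have key : x * (x - r) * (x + r) = x ^ 3 - c * x := by linear_combination (-x) * hr
    rw [Matrix.algebraMap_eq_diagonal, hMeq, Matrix.det_fin_three, key, hc]
    simp [Matrix.diagonal, Matrix.smul_apply]
    push_cast
    linear_combination (x * ((α₁:ℂ)*(α₃:ℂ)*((j 1 : ℝ):ℂ)^2 + (α₁:ℂ)*(α₂:ℂ)*((j 2 : ℝ):ℂ)^2
      + (α₂:ℂ)*(α₃:ℂ)*((j 0 : ℝ):ℂ)^2)) * Complex.I_sq
  rw [hmem, hdet]
  simp only [mul_eq_zero, Set.mem_insert_iff, Set.mem_singleton_iff]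
  constructor
  · rintro ((h | h) | h)
    · exact Or.inl h
    · exact Or.inr (Or.inl (sub_eq_zero.mp h))
    · exact Or.inr (Or.inr (eq_neg_of_add_eq_zero_left h))
  · rintro (h | h | h)
    · exact Or.inl (Or.inl h)
    · exact Or.inl (Or.inr (sub_eq_zero.mpr h))
    · exact Or.inr (by rw [h]; ring)
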